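/- arXiv:1601.06888 — 3 statements merged into one kernel-verified Lean document; each statement's English description precedes it below -/
import Mathlib

section
/- For the d-dimensional Werner-Holevo channel W_d(ρ) = (I tr ρ − ρ^T)/(d−1), the pair ρ_A = I_A/d and V_AB = (I_AB/(d+2) − 2Φ_d/(d(d+2)))^{T_B} is a feasible solution to the PPT-preserving fidelity SDP with k = (d+2)/d achieving fidelity 1; in particular tr(J_{W_d} V_AB) = 1, 0 ≤ V_AB ≤ ρ_A ⊗ I_B, and −(d/(d+2)) ρ_A ⊗ I_B ≤ V_AB^{T_B} ≤ (d/(d+2)) ρ_A ⊗ I_B. -/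
open Matrix
open scoped Kronecker ComplexOrder

/-- Loewner order: `Loe M N` means `M ≤ N`. -/
def Loe {n : Type*} [Fintype n] (M N : Matrix n n ℂ) : Prop := (N - M).PosSemidef

/-- Partial transpose on the second tensor factor. -/
def PTb {A B : Type*} (M : Matrix (A × B) (A × B) ℂ) : Matrix (A × B) (A × B) ℂ :=
  fun p q => M (p.1, q.2) (q.1, p.2)

/-- The unnormalized maximally entangled projector `Φ_d`. -/
def Phi (d : ℕ) : Matrix (Fin d × Fin d) (Fin d × Fin d) ℂ :=
  fun p q => if p.1 = p.2 ∧ q.1 = q.2 then 1 else 0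

/-! ### Auxiliary machinery -/

/-- The swap operator `S = Φ^{T_B}`. -/
noncomputable def Sw (d : ℕ) : Matrix (Fin d × Fin d) (Fin d × Fin d) ℂ := PTb (Phi d)

lemma Sw_apply {d} (p q : Fin d × Fin d) :
    Sw d p q = if p.1 = q.2 ∧ q.1 = p.2 then 1 else 0 := rfl

lemma PTb_PTb {A B : Type*} (M : Matrix (A × B) (A × B) ℂ) : PTb (PTb M) = M := rfl

lemma PTb_one {d : ℕ} : PTb (1 : Matrix (Fin d × Fin d) (Fin d × Fin d) ℂ) = 1 := by
  ext p q
  simp only [PTb, one_apply, Prod.ext_iff]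
  split_ifs <;> simp_all

lemma psd_smul {n : Type*} [Fintype n] {M : Matrix n n ℂ} (hM : M.PosSemidef)
    {c : ℝ} (hc : 0 ≤ c) : ((c : ℂ) • M).PosSemidef := by
  constructor
  · unfold Matrix.IsHermitian
    rw [conjTranspose_smul, hM.1.eq]
    congr 1
    simp
  · intro x
    have h := mul_nonneg (by exact_mod_cast hc : (0:ℂ) ≤ (c:ℂ)) (hM.2 x)
    simp only [Finsupp.mul_sum] at h
    convert h using 1
    refine Finsupp.sum_congr fun i _ => Finsupp.sum_congr fun j _ => ?_
    simp only [Matrix.smul_apply, smul_eq_mul]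
    ring

lemma psd_of_sq {n : Type*} [Fintype n] {M : Matrix n n ℂ} (hM : M.IsHermitian)
    {c : ℝ} (hc : 0 < c) (h : M * M = (c : ℂ) • M) : M.PosSemidef := by
  have : M = ((c⁻¹ : ℝ) : ℂ) • (Mᴴ * M) := by
    rw [hM.eq, h, smul_smul]
    push_cast
    rw [inv_mul_cancel₀ (by exact_mod_cast hc.ne'), one_smul]
  rw [this]
  exact psd_smul (posSemidef_conjTranspose_mul_self M) (by positivity)

lemma Sw_herm {d} : (Sw d).IsHermitian := by
  unfold Matrix.IsHermitian
  ext p q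
  simp only [conjTranspose_apply, Sw_apply]
  split_ifs with h1 h2 h2 <;> simp_all [and_comm]

lemma Phi_herm {d} : (Phi d).IsHermitian := by
  unfold Matrix.IsHermitian
  ext p q
  simp only [conjTranspose_apply, Phi]
  split_ifs with h1 h2 h2 <;> simp_all [and_comm]

lemma Sw_mul_Sw {d} : Sw d * Sw d = 1 := by
  ext p q
  simp only [mul_apply, Sw_apply, Fintype.sum_prod_type, one_apply, ite_and, ite_mul, one_mul,
    zero_mul, Finset.sum_ite_eq, Finset.sum_ite_eq', Finset.mem_univ, if_true]
  split_ifs <;> simp_all [Prod.ext_iff]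

lemma Phi_mul_Phi {d} : Phi d * Phi d = (d : ℂ) • Phi d := by
  ext p q
  simp only [mul_apply, Phi, Fintype.sum_prod_type, Matrix.smul_apply, smul_eq_mul, ite_and, ite_mul,
    one_mul, zero_mul, mul_ite, mul_one, mul_zero]
  split_ifs with h1 <;>
    simp_all [Finset.sum_ite_eq, Finset.sum_ite_eq', Fin.sum_univ_eq_sum_range]

lemma psd_one_add_Sw {d} : ((1 : Matrix (Fin d × Fin d) (Fin d × Fin d) ℂ) + Sw d).PosSemidef := by
  refine psd_of_sq (Matrix.isHermitian_one.add Sw_herm) (c := 2) two_pos ?_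
  simp only [mul_add, add_mul, one_mul, mul_one, Sw_mul_Sw]
  push_cast
  module

lemma psd_one_sub_Sw {d} : ((1 : Matrix (Fin d × Fin d) (Fin d × Fin d) ℂ) - Sw d).PosSemidef := by
  refine psd_of_sq (Matrix.isHermitian_one.sub Sw_herm) (c := 2) two_pos ?_
  simp only [mul_sub, sub_mul, one_mul, mul_one, Sw_mul_Sw]
  push_cast
  module

lemma psd_Phi {d : ℕ} (hd : 0 < d) : (Phi d).PosSemidef := by
  refine psd_of_sq Phi_herm (c := d) (by exact_mod_cast hd) ?_
  rw [Phi_mul_Phi]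
  push_cast
  rfl

lemma psd_dOne_sub_Phi {d : ℕ} (hd : 0 < d) :
    ((d : ℂ) • (1 : Matrix (Fin d × Fin d) (Fin d × Fin d) ℂ) - Phi d).PosSemidef := by
  have herm : ((d : ℂ) • (1 : Matrix (Fin d × Fin d) (Fin d × Fin d) ℂ) - Phi d).IsHermitian := by
    refine IsHermitian.sub ?_ Phi_herm
    unfold Matrix.IsHermitian
    rw [conjTranspose_smul, conjTranspose_one]
    congr 1
    simp
  refine psd_of_sq herm (c := d) (by exact_mod_cast hd) ?_
  simp only [mul_sub, sub_mul, smul_mul_assoc, mul_smul_comm, one_mul, mul_one, Phi_mul_Phi]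
  push_cast
  module

lemma trace_Sw {d} : (Sw d).trace = (d : ℂ) := by
  simp only [Matrix.trace, Matrix.diag, Sw_apply, Fintype.sum_prod_type, and_self]
  simp [Finset.sum_ite_eq, Finset.sum_ite_eq']

/-- For the Werner–Holevo channel `W_d` with Choi matrix `J = (I − S)/(d−1)`,
the pair `ρ = I/d`, `V = (I/(d+2) − 2Φ_d/(d(d+2)))^{T_B}` is feasible for the
PPT-preserving fidelity SDP with `k = (d+2)/d` and achieves fidelity `1`. -/
theorem wernerHolevo_ppt_feasible (d : ℕ) (hd : 2 ≤ d) :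
    let J : Matrix (Fin d × Fin d) (Fin d × Fin d) ℂ :=
      ((d : ℂ) - 1)⁻¹ • (1 - PTb (Phi d))
    let ρ : Matrix (Fin d) (Fin d) ℂ := ((d : ℂ))⁻¹ • 1
    let V : Matrix (Fin d × Fin d) (Fin d × Fin d) ℂ :=
      PTb (((d : ℂ) + 2)⁻¹ • (1 : Matrix (Fin d × Fin d) (Fin d × Fin d) ℂ) -
        (2 / ((d : ℂ) * ((d : ℂ) + 2))) • Phi d)
    (J * V).trace = 1 ∧
    V.PosSemidef ∧
    Loe V (ρ ⊗ₖ (1 : Matrix (Fin d) (Fin d) ℂ)) ∧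
    Loe (-(((d : ℂ) / ((d : ℂ) + 2)) • (ρ ⊗ₖ (1 : Matrix (Fin d) (Fin d) ℂ)))) (PTb V) ∧
    Loe (PTb V) (((d : ℂ) / ((d : ℂ) + 2)) • (ρ ⊗ₖ (1 : Matrix (Fin d) (Fin d) ℂ))) := by
  intro J ρ V
  have hd0 : (d : ℂ) ≠ 0 := by
    exact_mod_cast Nat.cast_ne_zero.mpr (by omega)
  have hd2 : (d : ℂ) + 2 ≠ 0 := by
    intro h
    have : (d : ℂ) = -2 := by linear_combination h
    have : (d : ℝ) = -2 := by exact_mod_cast congrArg Complex.re this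
    have : (0:ℝ) ≤ (d:ℝ) := by positivity
    linarith
  have hd1 : (d : ℂ) - 1 ≠ 0 := by
    intro h
    have : (d : ℂ) = 1 := by linear_combination h
    have : d = 1 := by exact_mod_cast this
    omega
  have hdR : (0:ℝ) < (d:ℝ) := by exact_mod_cast (by omega : 0 < d)
  have hdR2 : (0:ℝ) < (d:ℝ) + 2 := by linarith
  -- abbreviations
  set a : ℂ := ((d : ℂ) + 2)⁻¹ with ha
  set b : ℂ := 2 / ((d : ℂ) * ((d : ℂ) + 2)) with hb
  have hV : V = a • (1 : Matrix (Fin d × Fin d) (Fin d × Fin d) ℂ) - b • Sw d := by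
    have : V = a • PTb (1 : Matrix (Fin d × Fin d) (Fin d × Fin d) ℂ) - b • Sw d := rfl
    rw [this, PTb_one]
  have hPTbV : PTb V = a • (1 : Matrix (Fin d × Fin d) (Fin d × Fin d) ℂ) - b • Phi d :=
    PTb_PTb _
  have hkron : ρ ⊗ₖ (1 : Matrix (Fin d) (Fin d) ℂ)
      = ((d : ℂ))⁻¹ • (1 : Matrix (Fin d × Fin d) (Fin d × Fin d) ℂ) := by
    show (((d : ℂ))⁻¹ • (1 : Matrix (Fin d) (Fin d) ℂ)) ⊗ₖ _ = _
    rw [Matrix.smul_kronecker, Matrix.one_kronecker_one]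
  refine ⟨?_, ?_, ?_, ?_, ?_⟩
  · -- trace
    have hJ : J = ((d : ℂ) - 1)⁻¹ • (1 - Sw d) := rfl
    have expand : (1 - Sw d) * (a • (1 : Matrix (Fin d × Fin d) (Fin d × Fin d) ℂ) - b • Sw d)
        = (a + b) • (1 : Matrix (Fin d × Fin d) (Fin d × Fin d) ℂ) - (a + b) • Sw d := by
      simp only [mul_sub, sub_mul, mul_smul_comm, smul_mul_assoc, one_mul, mul_one, Sw_mul_Sw]
      module
    rw [hJ, hV, smul_mul_assoc, expand, trace_smul, trace_sub, trace_smul, trace_smul,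
      trace_Sw, trace_one]
    have hcard : (Fintype.card (Fin d × Fin d) : ℂ) = (d : ℂ) * d := by
      simp [Fintype.card_prod]
    rw [hcard, smul_eq_mul, smul_eq_mul, smul_eq_mul, ha, hb]
    field_simp
    try ring
  · -- V PSD
    have hVc : V = (((((d:ℝ)) - 2) / (2 * (d:ℝ) * ((d:ℝ) + 2)) : ℝ) : ℂ) • (1 + Sw d)
        + (((1 / (2 * (d:ℝ)) : ℝ)) : ℂ) • (1 - Sw d) := by
      rw [hV, ha, hb]
      match_scalars <;> push_cast <;> field_simp <;> ring
    rw [hVc]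
    refine PosSemidef.add (psd_smul psd_one_add_Sw ?_) (psd_smul psd_one_sub_Sw ?_)
    · apply div_nonneg
      · have : (2:ℝ) ≤ (d:ℝ) := by exact_mod_cast hd
        linarith
      · positivity
    · positivity
  · -- V ≤ ρ ⊗ 1
    show (ρ ⊗ₖ (1 : Matrix (Fin d) (Fin d) ℂ) - V).PosSemidef
    have : ρ ⊗ₖ (1 : Matrix (Fin d) (Fin d) ℂ) - V
        = (((2 / ((d:ℝ) * ((d:ℝ) + 2)) : ℝ)) : ℂ) • (1 + Sw d) := by
      rw [hkron, hV, ha, hb]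
      match_scalars <;> push_cast <;> field_simp <;> ring
    rw [this]
    exact psd_smul psd_one_add_Sw (by positivity)
  · -- lower PPT bound
    show (PTb V - -(((d : ℂ) / ((d : ℂ) + 2)) • (ρ ⊗ₖ (1 : Matrix (Fin d) (Fin d) ℂ)))).PosSemidef
    have : PTb V - -(((d : ℂ) / ((d : ℂ) + 2)) • (ρ ⊗ₖ (1 : Matrix (Fin d) (Fin d) ℂ)))
        = (((2 / ((d:ℝ) * ((d:ℝ) + 2)) : ℝ)) : ℂ) • ((d : ℂ) • 1 - Phi d) := by
      rw [hkron, hPTbV, ha, hb]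
      match_scalars <;> push_cast <;> field_simp <;> ring
    rw [this]
    exact psd_smul (psd_dOne_sub_Phi (by omega)) (by positivity)
  · -- upper PPT bound
    show ((((d : ℂ) / ((d : ℂ) + 2)) • (ρ ⊗ₖ (1 : Matrix (Fin d) (Fin d) ℂ))) - PTb V).PosSemidef
    have : (((d : ℂ) / ((d : ℂ) + 2)) • (ρ ⊗ₖ (1 : Matrix (Fin d) (Fin d) ℂ))) - PTb V
        = (((2 / ((d:ℝ) * ((d:ℝ) + 2)) : ℝ)) : ℂ) • Phi d := by
      rw [hkron, hPTbV, ha, hb]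
      match_scalars <;> push_cast <;> field_simp <;> ring
    rw [this]
    exact psd_smul (psd_Phi (by omega)) (by positivity)
end

section
/- For every quantum channel N, Γ(N) ≤ ‖J_N^{T_B}‖_cb-witnessed bound: specifically, if R, ρ are feasible for Γ(N) (R Hermitian, ρ a density operator, −ρ⊗I ≤ R^{T_B} ≤ ρ⊗I), then X = R^{T_B} is feasible for the SDP max ½tr(J_N^{T_B}X) + ½tr(J_N^{T_B}X†) subject to the block operator [[ρ0 ⊗ I, X],[X†, ρ1 ⊗ I]] ≥ 0 with ρ0, ρ1 density operators, and achieves value tr(J_N R). Hence Q_Γ(N) ≤ Q_Θ(N) = log ‖J_N^{T_B}‖_cb. -/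
open Matrix
open scoped Kronecker ComplexOrder

/-- Partial trace over the second tensor factor. -/
noncomputable def trB {A B : Type*} [Fintype B]
    (M : Matrix (A × B) (A × B) ℂ) : Matrix A A ℂ :=
  fun i j => ∑ b, M (i, b) (j, b)

/-- The values of Watrous's SDP characterization of `‖J^{T_B}‖_cb`:
`½ tr(J^{T_B} X) + ½ tr(J^{T_B} X†)` subject to
`[[ρ0 ⊗ I, X], [X†, ρ1 ⊗ I]] ≥ 0` with `ρ0, ρ1` density operators. -/
def CBSet {A B : Type*} [Fintype A] [Fintype B] [DecidableEq B]
    (J : Matrix (A × B) (A × B) ℂ) : Set ℝ :=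
  {t : ℝ | ∃ (ρ0 ρ1 : Matrix A A ℂ) (X : Matrix (A × B) (A × B) ℂ),
    ρ0.PosSemidef ∧ ρ0.trace = 1 ∧ ρ1.PosSemidef ∧ ρ1.trace = 1 ∧
    (Matrix.fromBlocks (ρ0 ⊗ₖ (1 : Matrix B B ℂ)) X
      Xᴴ (ρ1 ⊗ₖ (1 : Matrix B B ℂ))).PosSemidef ∧
    (2⁻¹ * ((PTb J * X).trace + (PTb J * Xᴴ).trace)).re = t}

lemma PTb_herm {A B : Type*} {M : Matrix (A × B) (A × B) ℂ} (h : M.IsHermitian) :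
    (PTb M)ᴴ = PTb M := by
  ext p q
  show star (M (q.1, p.2) (p.1, q.2)) = M (p.1, q.2) (q.1, p.2)
  exact congrFun (congrFun h (p.1, q.2)) (q.1, p.2)

lemma trace_PTb_mul {A B : Type*} [Fintype A] [Fintype B]
    (M N : Matrix (A × B) (A × B) ℂ) :
    (PTb M * PTb N).trace = (M * N).trace := by
  have h1 : ∀ (M N : Matrix (A × B) (A × B) ℂ),
      (M * N).trace = ∑ x : (A × B) × (A × B), M x.1 x.2 * N x.2 x.1 := by
    intro M N
    conv_rhs => rw [Fintype.sum_prod_type]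
    simp only [Matrix.trace, Matrix.diag, Matrix.mul_apply]
  rw [h1, h1]
  let e : (A × B) × (A × B) ≃ (A × B) × (A × B) :=
    ⟨fun x => ((x.1.1, x.2.2), (x.2.1, x.1.2)),
     fun x => ((x.1.1, x.2.2), (x.2.1, x.1.2)),
     fun x => rfl, fun x => rfl⟩
  exact Fintype.sum_equiv e _ _ (fun x => rfl)

lemma block_psd {n : Type*} [Fintype n] {P X : Matrix n n ℂ}
    (hX : Xᴴ = X) (h1 : (P + X).PosSemidef) (h2 : (P - X).PosSemidef) :
    (Matrix.fromBlocks P X Xᴴ P).PosSemidef := by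
  have hP : Pᴴ = P := by
    have h := h2.1
    rw [Matrix.IsHermitian, conjTranspose_sub, hX] at h
    exact sub_left_inj.mp h
  rw [Matrix.posSemidef_iff_dotProduct_mulVec]
  constructor
  · simp [Matrix.IsHermitian, Matrix.fromBlocks_conjTranspose, hP, hX,
      conjTranspose_conjTranspose]
  · intro x
    set u := x ∘ Sum.inl with hu
    set v := x ∘ Sum.inr with hv
    have hx : x = Sum.elim u v := by funext i; cases i <;> rfl
    have hs : star (Sum.elim u v) = Sum.elim (star u) (star v) := by
      funext i; cases i <;> rfl
    rw [hx, Matrix.fromBlocks_mulVec, hs, sumElim_dotProduct_sumElim]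
    simp only [Sum.elim_comp_inl, Sum.elim_comp_inr]
    have q1 := h1.dotProduct_mulVec_nonneg (u + v)
    have q2 := h2.dotProduct_mulVec_nonneg (u - v)
    have key : star u ⬝ᵥ (P *ᵥ u + X *ᵥ v) + star v ⬝ᵥ (Xᴴ *ᵥ u + P *ᵥ v)
        = 2⁻¹ * (star (u + v) ⬝ᵥ ((P + X) *ᵥ (u + v)))
          + 2⁻¹ * (star (u - v) ⬝ᵥ ((P - X) *ᵥ (u - v))) := by
      rw [hX]
      simp only [star_add, star_sub, Matrix.add_mulVec, Matrix.sub_mulVec,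
        Matrix.mulVec_add, Matrix.mulVec_sub, dotProduct_add, dotProduct_sub,
        add_dotProduct, sub_dotProduct]
      ring
    rw [key]
    exact add_nonneg (mul_nonneg (by norm_num [Complex.le_def]) q1) (mul_nonneg (by norm_num [Complex.le_def]) q2)

/-- If `(R, ρ)` is feasible for `Γ(N)`, then `X = R^{T_B}` (with `ρ0 = ρ1 = ρ`)
is feasible for the SDP for `‖J_N^{T_B}‖_cb` and achieves value `tr(J_N R)`;
hence `Γ(N) ≤ ‖J_N^{T_B}‖_cb`, i.e. `Q_Γ(N) ≤ Q_Θ(N)`. -/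
theorem gamma_le_cb_bound
    {A B : Type*} [Fintype A] [Fintype B] [DecidableEq A] [DecidableEq B]
    (J : Matrix (A × B) (A × B) ℂ) (hJ : J.PosSemidef) (hTP : trB J = 1)
    (R : Matrix (A × B) (A × B) ℂ) (ρ : Matrix A A ℂ)
    (hR : R.IsHermitian) (hρ : ρ.PosSemidef) (hρ1 : ρ.trace = 1)
    (hlow : Loe (-(ρ ⊗ₖ (1 : Matrix B B ℂ))) (PTb R))
    (hupp : Loe (PTb R) (ρ ⊗ₖ (1 : Matrix B B ℂ)))
    (cbval : ℝ) (hcb : IsGreatest (CBSet J) cbval) :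
    (Matrix.fromBlocks (ρ ⊗ₖ (1 : Matrix B B ℂ)) (PTb R)
      (PTb R)ᴴ (ρ ⊗ₖ (1 : Matrix B B ℂ))).PosSemidef ∧
    (2⁻¹ * ((PTb J * PTb R).trace + (PTb J * (PTb R)ᴴ).trace)) = (J * R).trace ∧
    (J * R).trace.re ≤ cbval := by
  have hXh : (PTb R)ᴴ = PTb R := PTb_herm hR
  have h1 : ((ρ ⊗ₖ (1 : Matrix B B ℂ)) + PTb R).PosSemidef := by
    have h := hlow
    unfold Loe at h
    rw [sub_neg_eq_add, add_comm] at h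
    exact h
  have h2 : ((ρ ⊗ₖ (1 : Matrix B B ℂ)) - PTb R).PosSemidef := hupp
  have hblock := block_psd hXh h1 h2
  have ht : (PTb J * PTb R).trace = (J * R).trace := trace_PTb_mul J R
  have heq : (2⁻¹ * ((PTb J * PTb R).trace + (PTb J * (PTb R)ᴴ).trace))
      = (J * R).trace := by
    rw [hXh, ht]; ring
  refine ⟨hblock, heq, ?_⟩
  exact hcb.2 ⟨ρ, ρ, PTb R, hρ, hρ1, hρ, hρ1, hblock, by rw [heq]⟩
end

section
/- If A1 ≥ 0, A2 ≥ 0, B1, B2 Hermitian with −A1 ≤ B1 ≤ A1 and −A2 ≤ B2 ≤ A2, then the operators Y, V defined by Y + V = A1 ⊗ A2 and V − Y = B1 ⊗ B2 satisfy Y ≥ 0 and V ≥ 0. -/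
open Matrix
open scoped Kronecker ComplexOrder

lemma conjTranspose_kron {n m : Type*} [Fintype n] [Fintype m]
    (A : Matrix n n ℂ) (B : Matrix m m ℂ) : (A ⊗ₖ B)ᴴ = Aᴴ ⊗ₖ Bᴴ := by
  ext ⟨i, j⟩ ⟨k, l⟩
  simp [conjTranspose_apply, kroneckerMap_apply, mul_comm]

lemma kron_psd {n m : Type*} [Fintype n] [Fintype m] [DecidableEq n] [DecidableEq m]
    {A : Matrix n n ℂ} {B : Matrix m m ℂ} (hA : A.PosSemidef) (hB : B.PosSemidef) :
    (A ⊗ₖ B).PosSemidef := by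
  exact hA.kronecker hB

lemma psd_of_smul {k : Type*} [Fintype k] {M : Matrix k k ℂ} {c : ℝ} (hc : 0 < c)
    (h : (((c:ℂ)) • M).PosSemidef) : M.PosSemidef := by
  have : M = ((c⁻¹:ℝ):ℂ) • (((c:ℂ)) • M) := by
    rw [smul_smul, ← Complex.ofReal_mul, inv_mul_cancel₀ hc.ne', Complex.ofReal_one, one_smul]
  rw [this]
  refine posSemidef_iff_dotProduct_mulVec.mpr ⟨?_, fun x => ?_⟩
  · have := h.1
    unfold Matrix.IsHermitian at *
    rw [conjTranspose_smul, this]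
    congr 1
    simp
  · rw [smul_mulVec, dotProduct_smul, smul_eq_mul]
    have := h.dotProduct_mulVec_nonneg x
    have hnn : (0:ℝ) ≤ c⁻¹ := by positivity
    rw [Complex.le_def] at *
    constructor
    · simp only [Complex.mul_re, Complex.ofReal_re, Complex.ofReal_im, Complex.zero_re] at *
      nlinarith [this.1]
    · simp only [Complex.mul_im, Complex.ofReal_re, Complex.ofReal_im, Complex.zero_im] at *
      nlinarith [this.2]

/-- Positivity lemma for combining dual SDP solutions under tensor products:
if `A1, A2 ≥ 0`, `B1, B2` are Hermitian with `−A1 ≤ B1 ≤ A1` and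
`−A2 ≤ B2 ≤ A2`, then `Y, V` defined by `Y + V = A1 ⊗ A2`, `V − Y = B1 ⊗ B2`
satisfy `Y ≥ 0` and `V ≥ 0`. -/
theorem tensor_dual_positivity
    {n m : Type*} [Fintype n] [Fintype m] [DecidableEq n] [DecidableEq m]
    (A1 B1 : Matrix n n ℂ) (A2 B2 : Matrix m m ℂ)
    (hA1 : A1.PosSemidef) (hA2 : A2.PosSemidef)
    (hB1 : B1.IsHermitian) (hB2 : B2.IsHermitian)
    (h1low : Loe (-A1) B1) (h1upp : Loe B1 A1)
    (h2low : Loe (-A2) B2) (h2upp : Loe B2 A2)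
    (Y V : Matrix (n × m) (n × m) ℂ)
    (hYV : Y + V = A1 ⊗ₖ A2) (hVY : V - Y = B1 ⊗ₖ B2) :
    Y.PosSemidef ∧ V.PosSemidef := by
  unfold Loe at h1low h1upp h2low h2upp
  rw [sub_neg_eq_add] at h1low h2low
  have hP1 := kron_psd h1upp h2low  -- (A1-B1)⊗(B2+A2)
  have hP2 := kron_psd h1low h2upp  -- (B1+A1)⊗(A2-B2)
  have hQ1 := kron_psd h1upp h2upp  -- (A1-B1)⊗(A2-B2)
  have hQ2 := kron_psd h1low h2low  -- (B1+A1)⊗(B2+A2)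
  have hA : A1 ⊗ₖ A2 = Y + V := hYV.symm
  have hBk : B1 ⊗ₖ B2 = V - Y := hVY.symm
  have hY : ((4:ℝ):ℂ) • Y = (A1 - B1) ⊗ₖ (B2 + A2) + (B1 + A1) ⊗ₖ (A2 - B2) := by
    ext ⟨i, j⟩ ⟨k, l⟩
    have h1 := congrFun (congrFun hA ⟨i, j⟩) ⟨k, l⟩
    have h2 := congrFun (congrFun hBk ⟨i, j⟩) ⟨k, l⟩
    simp only [kroneckerMap_apply, Matrix.add_apply, Matrix.sub_apply,
      Matrix.smul_apply, smul_eq_mul] at *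
    push_cast
    linear_combination (-2) * h1 + 2 * h2
  have hV : ((4:ℝ):ℂ) • V = (A1 - B1) ⊗ₖ (A2 - B2) + (B1 + A1) ⊗ₖ (B2 + A2) := by
    ext ⟨i, j⟩ ⟨k, l⟩
    have h1 := congrFun (congrFun hA ⟨i, j⟩) ⟨k, l⟩
    have h2 := congrFun (congrFun hBk ⟨i, j⟩) ⟨k, l⟩
    simp only [kroneckerMap_apply, Matrix.add_apply, Matrix.sub_apply,
      Matrix.smul_apply, smul_eq_mul] at *
    push_cast
    linear_combination (-2) * h1 - 2 * h2
  constructor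
  · exact psd_of_smul (by norm_num) (hY ▸ hP1.add hP2)
  · exact psd_of_smul (by norm_num) (hV ▸ hQ1.add hQ2)
end
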